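/- Let ω = e^{2πi/3} and for i, j ∈ {1,2,3} define μ_{ij} : 𝕊¹ → ℝ by μ_{ij}(v) = √2·Re[(ω^{1−i} − ω^{1−j})v], and set μ(v) = max_{i,j} μ_{ij}(v). Then: (a) the maximum of μ over 𝕊¹ equals √6 and is achieved exactly at the v with v³ = ±i; (b) the minimum of μ over 𝕊¹ equals 3√2/2 and is achieved exactly at the v with v³ = ±1; (c) if v³ ≠ ±1 then there is a unique pair (i,j) with μ_{ij}(v) = μ(v); (d) for each v with v³ = ±1 there are exactly two pairs (i,j) with i ≠ j and μ_{ij}(v) = μ(v). -/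

import Mathlib

open Real

/-- `ω = e^{2πi/3}`. -/
noncomputable def omega3 : ℂ := Complex.exp (2 * Real.pi * Complex.I / 3)

/-- `μ_{ij}(v) = √2·Re[(ω^{1−i} − ω^{1−j})v]` for `i,j ∈ {1,2,3}`; here the index
`i ∈ {1,2,3}` is encoded by `i : Fin 3` (representing `i+1`), so that the
exponent `1−(i+1)` is `−i`. -/
noncomputable def muIJ (i j : Fin 3) (v : ℂ) : ℝ :=
  Real.sqrt 2 * ((omega3 ^ (-(i : ℤ)) - omega3 ^ (-(j : ℤ))) * v).re

/-- `μ(v) = max_{i,j} μ_{ij}(v)`. -/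
noncomputable def muMax (v : ℂ) : ℝ :=
  Finset.univ.sup' Finset.univ_nonempty
    (fun p : Fin 3 × Fin 3 => muIJ p.1 p.2 v)

lemma omega3_eq : omega3 = ⟨-1/2, Real.sqrt 3 / 2⟩ := by
  have h : (2 * Real.pi * Complex.I / 3) = ((2 * Real.pi / 3 : ℝ) : ℂ) * Complex.I := by
    push_cast; ring
  rw [omega3, h, Complex.exp_mul_I]
  have hc : Real.cos (2 * Real.pi / 3) = -(1/2) := by
    have : (2 * Real.pi / 3) = Real.pi - Real.pi/3 := by ring
    rw [this, Real.cos_pi_sub, Real.cos_pi_div_three]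
  have hs : Real.sin (2 * Real.pi / 3) = Real.sqrt 3 / 2 := by
    have : (2 * Real.pi / 3) = Real.pi - Real.pi/3 := by ring
    rw [this, Real.sin_pi_sub, Real.sin_pi_div_three]
  apply Complex.ext <;>
    simp only [Complex.add_re, Complex.add_im, Complex.mul_re, Complex.mul_im,
      Complex.I_re, Complex.I_im, Complex.cos_ofReal_re, Complex.cos_ofReal_im,
      Complex.sin_ofReal_re, Complex.sin_ofReal_im, hc, hs] <;> ring

noncomputable def w1 : ℂ := ⟨-1/2, -(Real.sqrt 3/2)⟩

lemma s3 : Real.sqrt 3 * Real.sqrt 3 = 3 := Real.mul_self_sqrt (by norm_num)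

lemma omega3_mul : omega3 * w1 = 1 := by
  rw [omega3_eq]
  apply Complex.ext <;>
    simp [w1, Complex.mul_re, Complex.mul_im] <;> nlinarith [s3]

lemma omega3_inv : omega3⁻¹ = w1 := inv_eq_of_mul_eq_one_right omega3_mul

lemma pw0 : omega3 ^ (-((0:Fin 3):ℤ)) = 1 := by norm_num

lemma pw1 : omega3 ^ (-((1:Fin 3):ℤ)) = w1 := by
  norm_num [zpow_neg, omega3_inv]

lemma pw2 : omega3 ^ (-((2:Fin 3):ℤ)) = omega3 := by
  have : omega3 ^ (-((2:Fin 3):ℤ)) = (omega3⁻¹)^(2:ℕ) := by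
    rw [inv_pow, ← zpow_natCast, ← zpow_neg]; norm_num
  rw [this, omega3_inv, omega3_eq]
  apply Complex.ext <;> simp [w1, pow_two, Complex.mul_re, Complex.mul_im] <;> nlinarith [s3]

noncomputable def vA (v : ℂ) : ℝ := (3*v.re + Real.sqrt 3*v.im)/2
noncomputable def vB (v : ℂ) : ℝ := (3*v.re - Real.sqrt 3*v.im)/2
noncomputable def vC (v : ℂ) : ℝ := Real.sqrt 3 * v.im


lemma cmulre (c v : ℂ) : (c * v).re = c.re * v.re - c.im * v.im := Complex.mul_re c v

lemma mval00 (v : ℂ) : muIJ 0 0 v = 0 := by simp [muIJ]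
lemma mval11 (v : ℂ) : muIJ 1 1 v = 0 := by simp [muIJ]
lemma mval22 (v : ℂ) : muIJ 2 2 v = 0 := by simp [muIJ]

lemma pw1' : omega3 ^ (-((1:Fin 3):ℤ)) = ⟨-1/2, -(Real.sqrt 3/2)⟩ := by rw [pw1]; rfl
lemma pw2' : omega3 ^ (-((2:Fin 3):ℤ)) = ⟨-1/2, Real.sqrt 3/2⟩ := by rw [pw2, omega3_eq]

lemma mval01 (v : ℂ) : muIJ 0 1 v = Real.sqrt 2 * vB v := by
  simp only [muIJ, pw0, pw1', cmulre, Complex.sub_re, Complex.sub_im, Complex.one_re,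
    Complex.one_im, w1, vB]; ring

lemma mval10 (v : ℂ) : muIJ 1 0 v = Real.sqrt 2 * (-vB v) := by
  simp only [muIJ, pw0, pw1', cmulre, Complex.sub_re, Complex.sub_im, Complex.one_re,
    Complex.one_im, w1, vB]; ring

lemma mval02 (v : ℂ) : muIJ 0 2 v = Real.sqrt 2 * vA v := by
  simp only [muIJ, pw0, pw2', cmulre, Complex.sub_re, Complex.sub_im, Complex.one_re,
    Complex.one_im, vA]; ring

lemma mval20 (v : ℂ) : muIJ 2 0 v = Real.sqrt 2 * (-vA v) := by
  simp only [muIJ, pw0, pw2', cmulre, Complex.sub_re, Complex.sub_im, Complex.one_re,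
    Complex.one_im, vA]; ring

lemma mval12 (v : ℂ) : muIJ 1 2 v = Real.sqrt 2 * vC v := by
  simp only [muIJ, pw1', pw2', cmulre, Complex.sub_re, Complex.sub_im, vC]; ring

lemma mval21 (v : ℂ) : muIJ 2 1 v = Real.sqrt 2 * (-vC v) := by
  simp only [muIJ, pw1', pw2', cmulre, Complex.sub_re, Complex.sub_im, vC]; ring

lemma sqrt2_pos : (0:ℝ) < Real.sqrt 2 := Real.sqrt_pos.mpr (by norm_num)

lemma muIJ_le_muMax (v : ℂ) (p : Fin 3 × Fin 3) : muIJ p.1 p.2 v ≤ muMax v :=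
  Finset.le_sup' (fun p : Fin 3 × Fin 3 => muIJ p.1 p.2 v) (Finset.mem_univ p)

lemma muMax_eq (v : ℂ) : muMax v = Real.sqrt 2 * (|vA v| ⊔ |vB v| ⊔ |vC v|) := by
  set M := |vA v| ⊔ |vB v| ⊔ |vC v| with hM
  have hMA : |vA v| ≤ M := le_sup_of_le_left le_sup_left
  have hMB : |vB v| ≤ M := le_sup_of_le_left le_sup_right
  have hMC : |vC v| ≤ M := le_sup_right
  have hM0 : 0 ≤ M := le_trans (abs_nonneg _) hMA
  have k : ∀ t : ℝ, t ≤ M → Real.sqrt 2 * t ≤ Real.sqrt 2 * M := fun t h =>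
    mul_le_mul_of_nonneg_left h sqrt2_pos.le
  apply le_antisymm
  · apply Finset.sup'_le
    rintro ⟨i, j⟩ -
    fin_cases i <;> fin_cases j
    · exact le_trans (le_of_eq (mval00 v)) (mul_nonneg sqrt2_pos.le hM0)
    · exact le_trans (le_of_eq (mval01 v)) (k _ ((le_abs_self _).trans hMB))
    · exact le_trans (le_of_eq (mval02 v)) (k _ ((le_abs_self _).trans hMA))
    · exact le_trans (le_of_eq (mval10 v)) (k _ ((neg_le_abs _).trans hMB))
    · exact le_trans (le_of_eq (mval11 v)) (mul_nonneg sqrt2_pos.le hM0)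
    · exact le_trans (le_of_eq (mval12 v)) (k _ ((le_abs_self _).trans hMC))
    · exact le_trans (le_of_eq (mval20 v)) (k _ ((neg_le_abs _).trans hMA))
    · exact le_trans (le_of_eq (mval21 v)) (k _ ((neg_le_abs _).trans hMC))
    · exact le_trans (le_of_eq (mval22 v)) (mul_nonneg sqrt2_pos.le hM0)
  · rcases max_cases (|vA v| ⊔ |vB v|) |vC v| with ⟨h1, -⟩ | ⟨h1, -⟩
    · rcases max_cases |vA v| |vB v| with ⟨h2, -⟩ | ⟨h2, -⟩
      · rw [hM, h1, h2]
        rcases abs_choice (vA v) with h | h <;> rw [h]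
        · exact le_trans (le_of_eq (mval02 v).symm) (muIJ_le_muMax v (0, 2))
        · exact le_trans (le_of_eq (mval20 v).symm) (muIJ_le_muMax v (2, 0))
      · rw [hM, h1, h2]
        rcases abs_choice (vB v) with h | h <;> rw [h]
        · exact le_trans (le_of_eq (mval01 v).symm) (muIJ_le_muMax v (0, 1))
        · exact le_trans (le_of_eq (mval10 v).symm) (muIJ_le_muMax v (1, 0))
    · rw [hM, h1]
      rcases abs_choice (vC v) with h | h <;> rw [h]
      · exact le_trans (le_of_eq (mval12 v).symm) (muIJ_le_muMax v (1, 2))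
      · exact le_trans (le_of_eq (mval21 v).symm) (muIJ_le_muMax v (2, 1))

lemma abs_le_abs_sq {a b : ℝ} (h : a^2 ≤ b^2) : |a| ≤ |b| := by
  rw [← Real.sqrt_sq_eq_abs, ← Real.sqrt_sq_eq_abs]; exact Real.sqrt_le_sqrt h

lemma abs_eq_of_sq {a c : ℝ} (h : a^2 = c^2) (hc : 0 ≤ c) : |a| = c := by
  rw [← Real.sqrt_sq_eq_abs, h, Real.sqrt_sq hc]

section core

variable {x y s A B C : ℝ}

lemma core_up (hs : s^2 = 3) (h1 : x^2 + y^2 = 1)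
    (hA : A = (3*x + s*y)/2) (hB : B = (3*x - s*y)/2) (hC : C = s*y) :
    A^2 ≤ 3 ∧ B^2 ≤ 3 ∧ C^2 ≤ 3 := by
  subst hA hB hC
  refine ⟨?_, ?_, ?_⟩
  · nlinarith [sq_nonneg (x - s*y)]
  · nlinarith [sq_nonneg (x + s*y)]
  · nlinarith [sq_nonneg x]

lemma core_sum (hs : s^2 = 3) (h1 : x^2 + y^2 = 1)
    (hA : A = (3*x + s*y)/2) (hB : B = (3*x - s*y)/2) (hC : C = s*y) :
    A^2 + B^2 + C^2 = 9/2 := by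
  subst hA hB hC; nlinarith []

lemma core_low (hs : s^2 = 3) (h1 : x^2 + y^2 = 1)
    (hA : A = (3*x + s*y)/2) (hB : B = (3*x - s*y)/2) (hC : C = s*y)
    (ha : A^2 ≤ 9/4) (hb : B^2 ≤ 9/4) (hc : C^2 ≤ 9/4) :
    y * (3*x^2 - y^2) = 0 := by
  subst hA hB hC
  have ha' : (0:ℝ) ≤ 9 - (3*x + s*y)^2 := by nlinarith
  have hb' : (0:ℝ) ≤ 9 - (3*x - s*y)^2 := by nlinarith
  have hy2 : y^2 ≤ 3/4 := by nlinarith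
  have hx2 : 1/4 ≤ x^2 := by nlinarith
  have k1 : 0 ≤ y^2 * (y^2 - 3*x^2) := by nlinarith [mul_nonneg ha' hb']
  have k2 : 0 ≤ y^2 * (3*x^2 - y^2) :=
    mul_nonneg (sq_nonneg y) (by nlinarith)
  have k3 : y^2 * (3*x^2 - y^2) = 0 := by nlinarith
  rcases mul_eq_zero.mp k3 with h | h
  · have : y = 0 := by nlinarith [sq_nonneg y]
    simp [this]
  · rw [h, mul_zero]

lemma core_hi_forward (hs : s^2 = 3) (h1 : x^2 + y^2 = 1)
    (hA : A = (3*x + s*y)/2) (hB : B = (3*x - s*y)/2) (hC : C = s*y)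
    (h : A^2 = 3 ∨ B^2 = 3 ∨ C^2 = 3) :
    x * (x^2 - 3*y^2) = 0 := by
  subst hA hB hC
  rcases h with h | h | h
  · have hx : x = s*y := by nlinarith [sq_nonneg (x - s*y)]
    rw [hx]; linear_combination s*y^3*hs
  · have hx : x = -(s*y) := by nlinarith [sq_nonneg (x + s*y)]
    rw [hx]; linear_combination -(s*y^3)*hs
  · have hx2 : x^2 = 0 := by nlinarith
    have hx : x = 0 := by nlinarith [sq_nonneg x]
    rw [hx]; ring

lemma core_hi_back (hs : s^2 = 3) (h1 : x^2 + y^2 = 1)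
    (hA : A = (3*x + s*y)/2) (hB : B = (3*x - s*y)/2) (hC : C = s*y)
    (h : x * (x^2 - 3*y^2) = 0) :
    A^2 = 3 ∨ B^2 = 3 ∨ C^2 = 3 := by
  subst hA hB hC
  rcases mul_eq_zero.mp h with hx | hq
  · right; right; nlinarith
  · have : (x - s*y) * (x + s*y) = 0 := by linear_combination hq - y^2*hs + 3*y^2
    rcases mul_eq_zero.mp this with h' | h'
    · left; have hx : x = s*y := by linarith
      nlinarith
    · right; left; have hx : x = -(s*y) := by linarith
      nlinarith

lemma core_lo_back (hs : s^2 = 3) (h1 : x^2 + y^2 = 1)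
    (hA : A = (3*x + s*y)/2) (hB : B = (3*x - s*y)/2) (hC : C = s*y)
    (h : y * (3*x^2 - y^2) = 0) :
    (A^2 ≤ 9/4 ∧ B^2 ≤ 9/4 ∧ C^2 ≤ 9/4) ∧ (A^2 = 9/4 ∨ B^2 = 9/4 ∨ C^2 = 9/4) := by
  subst hA hB hC
  rcases mul_eq_zero.mp h with hy | hq
  · subst hy
    have hx2 : x^2 = 1 := by nlinarith
    constructor
    · refine ⟨by nlinarith, by nlinarith, by nlinarith⟩
    · left; nlinarith
  · -- 3x² = y²
    have hx2 : x^2 = 1/4 := by nlinarith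
    have hy2 : y^2 = 3/4 := by nlinarith
    have ht : (s*x*y)^2 = 9/16 := by linear_combination x^2*y^2*hs + 3*y^2*hx2 + (3/4)*hy2
    constructor
    · refine ⟨by nlinarith [sq_nonneg (s*x*y - 3/4)], by nlinarith [sq_nonneg (s*x*y + 3/4)], by nlinarith⟩
    · right; right; nlinarith

lemma core_tri (hs : s^2 = 3) (h1 : x^2 + y^2 = 1)
    (hA : A = (3*x + s*y)/2) (hB : B = (3*x - s*y)/2) (hC : C = s*y)
    (hA0 : A ≠ 0) (hB0 : B ≠ 0) (hC0 : C ≠ 0) :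
    (B^2 < A^2 ∧ C^2 < A^2) ∨ (A^2 < B^2 ∧ C^2 < B^2) ∨ (A^2 < C^2 ∧ B^2 < C^2) := by
  have hrel : C = A - B := by subst hA hB hC; ring
  have hA2 : 0 < A^2 := by positivity
  have hB2 : 0 < B^2 := by positivity
  have hC2 : 0 < C^2 := by positivity
  rcases lt_trichotomy (A^2) (B^2) with h | h | h
  · rcases lt_trichotomy (B^2) (C^2) with g | g | g
    · right; right; exact ⟨h.trans g, g⟩
    · -- B² = C² with A² < B²: impossible
      exfalso
      have : (B - C) * (B + C) = 0 := by linear_combination g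
      rcases mul_eq_zero.mp this with h' | h'
      · have hab : A = 2*B := by rw [hrel] at h'; linarith
        have h2 : A^2 = 4*B^2 := by rw [hab]; ring
        linarith
      · have : A = 0 := by rw [hrel] at h'; linarith
        exact hA0 this
    · right; left; exact ⟨h, g⟩
  · -- A² = B²
    have : (A - B) * (A + B) = 0 := by linear_combination h
    rcases mul_eq_zero.mp this with h' | h'
    · exfalso; exact hC0 (by rw [hrel]; linarith)
    · have hCA : C = 2*A := by rw [hrel]; linarith
      have h2 : C^2 = 4*A^2 := by rw [hCA]; ring
      right; right
      constructor <;> linarith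
  · rcases lt_trichotomy (A^2) (C^2) with g | g | g
    · right; right; exact ⟨g, h.trans g⟩
    · -- A² = C² with B² < A²
      exfalso
      have : (A - C) * (A + C) = 0 := by linear_combination g
      rcases mul_eq_zero.mp this with h' | h'
      · have : B = 0 := by rw [hrel] at h'; linarith
        exact hB0 this
      · have hba : B = 2*A := by rw [hrel] at h'; linarith
        have h2 : B^2 = 4*A^2 := by rw [hba]; ring
        linarith
    · left; exact ⟨h, g⟩

end core

lemma unit_sq {v : ℂ} (hv : ‖v‖ = 1) : v.re^2 + v.im^2 = 1 := by
  have h := Complex.sq_norm v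
  rw [hv] at h
  rw [Complex.normSq_apply] at h
  nlinarith [h]

lemma cube_re (v : ℂ) : (v^3).re = v.re^3 - 3*v.re*v.im^2 := by
  simp [pow_succ, Complex.mul_re, Complex.mul_im]; ring

lemma cube_im (v : ℂ) : (v^3).im = 3*v.re^2*v.im - v.im^3 := by
  simp [pow_succ, Complex.mul_re, Complex.mul_im]; ring

lemma cube_sq {v : ℂ} (hv : ‖v‖ = 1) : (v^3).re^2 + (v^3).im^2 = 1 := by
  have : ‖v^3‖ = 1 := by rw [norm_pow, hv, one_pow]
  exact unit_sq this

lemma cube_pm_I {v : ℂ} (hv : ‖v‖ = 1) :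
    (v^3 = Complex.I ∨ v^3 = -Complex.I) ↔ (v^3).re = 0 := by
  constructor
  · rintro (h | h) <;> rw [h] <;> simp
  · intro h
    have h2 := cube_sq hv
    rw [h] at h2
    have : ((v^3).im - 1) * ((v^3).im + 1) = 0 := by nlinarith
    rcases mul_eq_zero.mp this with h' | h'
    · left; apply Complex.ext <;> simp [h] <;> linarith
    · right; apply Complex.ext <;> simp [h] <;> linarith

lemma cube_pm_one {v : ℂ} (hv : ‖v‖ = 1) :
    (v^3 = 1 ∨ v^3 = -1) ↔ (v^3).im = 0 := by
  constructor
  · rintro (h | h) <;> rw [h] <;> simp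
  · intro h
    have h2 := cube_sq hv
    rw [h] at h2
    have : ((v^3).re - 1) * ((v^3).re + 1) = 0 := by nlinarith
    rcases mul_eq_zero.mp this with h' | h'
    · left; apply Complex.ext <;> simp [h] <;> linarith
    · right; apply Complex.ext <;> simp [h] <;> linarith

noncomputable def Mv (v : ℂ) : ℝ := |vA v| ⊔ |vB v| ⊔ |vC v|

lemma sqrt3_sq : (Real.sqrt 3)^2 = 3 := Real.sq_sqrt (by norm_num)

lemma muMax_eq' (v : ℂ) : muMax v = Real.sqrt 2 * Mv v := muMax_eq v

lemma max3_cases (a b c : ℝ) : a ⊔ b ⊔ c = a ∨ a ⊔ b ⊔ c = b ∨ a ⊔ b ⊔ c = c := by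
  rcases max_cases (a ⊔ b) c with ⟨h1, -⟩ | ⟨h1, -⟩
  · rcases max_cases a b with ⟨h2, -⟩ | ⟨h2, -⟩
    · left; rw [h1, h2]
    · right; left; rw [h1, h2]
  · right; right; exact h1

section vlevel

variable {v : ℂ}

lemma vC_eq (v : ℂ) : vC v = Real.sqrt 3 * v.im := rfl
lemma vA_eq (v : ℂ) : vA v = (3*v.re + Real.sqrt 3 * v.im)/2 := rfl
lemma vB_eq (v : ℂ) : vB v = (3*v.re - Real.sqrt 3 * v.im)/2 := rfl

lemma Mv_le (hv : ‖v‖ = 1) : Mv v ≤ Real.sqrt 3 := by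
  obtain ⟨ha, hb, hc⟩ := core_up sqrt3_sq (unit_sq hv) (vA_eq v) (vB_eq v) (vC_eq v)
  have k : ∀ t : ℝ, t^2 ≤ 3 → |t| ≤ Real.sqrt 3 := by
    intro t ht
    have := abs_le_abs_sq (a := t) (b := Real.sqrt 3) (by rw [sqrt3_sq]; exact ht)
    rwa [abs_of_nonneg (Real.sqrt_nonneg 3)] at this
  exact sup_le (sup_le (k _ ha) (k _ hb)) (k _ hc)

lemma Mv_lo (hv : ‖v‖ = 1) : 3/2 ≤ Mv v := by
  by_contra hcon
  push_neg at hcon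
  rw [Mv, sup_lt_iff, sup_lt_iff] at hcon
  obtain ⟨⟨ha, hb⟩, hc⟩ := hcon
  have k : ∀ t : ℝ, |t| < 3/2 → t^2 < 9/4 := by
    intro t ht
    have h1 := abs_nonneg t
    have h2 := le_abs_self t
    have h3 := neg_abs_le t
    nlinarith
  have ha' := k _ ha; have hb' := k _ hb; have hc' := k _ hc
  rw [vA_eq] at ha'; rw [vB_eq] at hb'; rw [vC_eq] at hc'
  have hs := sqrt3_sq; have h1 := unit_sq hv
  have ha2 : (0:ℝ) < 9 - (3*v.re + Real.sqrt 3*v.im)^2 := by nlinarith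
  have hb2 : (0:ℝ) < 9 - (3*v.re - Real.sqrt 3*v.im)^2 := by nlinarith
  have hy2 : v.im^2 < 3/4 := by nlinarith
  have hx2 : 1/4 < v.re^2 := by nlinarith
  rcases eq_or_ne v.im 0 with h | h
  · rw [h] at hy2 ha2 h1
    nlinarith
  · have hy0 : 0 < v.im^2 := by positivity
    have k1 : 0 < v.im^2 * (v.im^2 - 3*v.re^2) := by nlinarith [mul_pos ha2 hb2]
    nlinarith [mul_nonneg (sq_nonneg v.im) (le_of_lt (by nlinarith : (0:ℝ) < 3*v.re^2 - v.im^2))]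

lemma Mv_hi_iff (hv : ‖v‖ = 1) : Mv v = Real.sqrt 3 ↔ (v^3).re = 0 := by
  have hre : (v^3).re = v.re * (v.re^2 - 3*v.im^2) := by rw [cube_re]; ring
  constructor
  · intro h
    have hone : vA v ^2 = 3 ∨ vB v ^2 = 3 ∨ vC v ^2 = 3 := by
      have := max3_cases |vA v| |vB v| |vC v|
      rw [← Mv, h] at this
      rcases this with h' | h' | h'
      · left; rw [← sq_abs, ← h', sqrt3_sq]
      · right; left; rw [← sq_abs, ← h', sqrt3_sq]
      · right; right; rw [← sq_abs, ← h', sqrt3_sq]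
    rw [hre]
    exact core_hi_forward sqrt3_sq (unit_sq hv) (vA_eq v) (vB_eq v) (vC_eq v) hone
  · intro h
    rw [hre] at h
    have hone := core_hi_back sqrt3_sq (unit_sq hv) (vA_eq v) (vB_eq v) (vC_eq v) h
    apply le_antisymm (Mv_le hv)
    have k : ∀ t : ℝ, t^2 = 3 → Real.sqrt 3 ≤ |t| := by
      intro t ht
      have : |t| = Real.sqrt 3 := abs_eq_of_sq (by rw [ht, sqrt3_sq]) (Real.sqrt_nonneg 3)
      exact this.ge
    rcases hone with h' | h' | h'
    · exact le_trans (k _ h') (le_sup_of_le_left le_sup_left)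
    · exact le_trans (k _ h') (le_sup_of_le_left le_sup_right)
    · exact le_trans (k _ h') le_sup_right

lemma Mv_lo_iff (hv : ‖v‖ = 1) : Mv v = 3/2 ↔ (v^3).im = 0 := by
  have him : (v^3).im = v.im * (3*v.re^2 - v.im^2) := by rw [cube_im]; ring
  constructor
  · intro h
    have k : ∀ t : ℝ, |t| ≤ Mv v → t^2 ≤ 9/4 := by
      intro t ht
      rw [h] at ht
      have h2 := le_abs_self t
      have h3 := neg_abs_le t
      nlinarith
    rw [him]
    exact core_low sqrt3_sq (unit_sq hv) (vA_eq v) (vB_eq v) (vC_eq v)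
      (k _ (le_sup_of_le_left le_sup_left)) (k _ (le_sup_of_le_left le_sup_right))
      (k _ le_sup_right)
  · intro h
    rw [him] at h
    obtain ⟨⟨ha, hb, hc⟩, hone⟩ :=
      core_lo_back sqrt3_sq (unit_sq hv) (vA_eq v) (vB_eq v) (vC_eq v) h
    apply le_antisymm
    · have k : ∀ t : ℝ, t^2 ≤ 9/4 → |t| ≤ 3/2 := by
        intro t ht
        rw [abs_le]; constructor <;> nlinarith
      exact sup_le (sup_le (k _ ha) (k _ hb)) (k _ hc)
    · have k : ∀ t : ℝ, t^2 = 9/4 → (3:ℝ)/2 ≤ |t| := by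
        intro t ht
        exact (abs_eq_of_sq (by rw [ht]; norm_num) (by norm_num : (0:ℝ) ≤ 3/2)).ge
      rcases hone with h' | h' | h'
      · exact le_trans (k _ h') (le_sup_of_le_left le_sup_left)
      · exact le_trans (k _ h') (le_sup_of_le_left le_sup_right)
      · exact le_trans (k _ h') le_sup_right

end vlevel

lemma fin3 (k : Fin 3) : k = 0 ∨ k = 1 ∨ k = 2 := by fin_cases k <;> simp

lemma ncard_c (v : ℂ) (p₀ : Fin 3 × Fin 3)
    (h : ∀ i j : Fin 3, muIJ i j v = muMax v ↔ (i, j) = p₀) :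
    {p : Fin 3 × Fin 3 | muIJ p.1 p.2 v = muMax v}.ncard = 1 := by
  have e : {p : Fin 3 × Fin 3 | muIJ p.1 p.2 v = muMax v} = {p₀} := by
    ext ⟨i, j⟩; simpa using h i j
  rw [e]; exact Set.ncard_singleton p₀

lemma ncard_d (v : ℂ) (p₀ p₁ : Fin 3 × Fin 3) (hne : p₀ ≠ p₁)
    (h : ∀ i j : Fin 3, (i ≠ j ∧ muIJ i j v = muMax v) ↔ ((i, j) = p₀ ∨ (i, j) = p₁)) :
    {p : Fin 3 × Fin 3 | p.1 ≠ p.2 ∧ muIJ p.1 p.2 v = muMax v}.ncard = 2 := by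
  have e : {p : Fin 3 × Fin 3 | p.1 ≠ p.2 ∧ muIJ p.1 p.2 v = muMax v} = {p₀, p₁} := by
    ext ⟨i, j⟩; simpa using h i j
  rw [e]; exact Set.ncard_pair hne

lemma cube_re_factor (v : ℂ) : (v^3).re = v.re * (v.re^2 - 3*v.im^2) := by rw [cube_re]; ring
lemma cube_im_factor (v : ℂ) : (v^3).im = v.im * (3*v.re^2 - v.im^2) := by rw [cube_im]; ring

lemma AB_prod (v : ℂ) : vA v * vB v = 3/4 * (3*v.re^2 - v.im^2) := by
  rw [vA_eq, vB_eq]; linear_combination (-(v.im^2)/4) * sqrt3_sq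

lemma sqrt2_sq : Real.sqrt 2 ^ 2 = 2 := Real.sq_sqrt (by norm_num)


set_option maxHeartbeats 2000000 in
lemma c_caseA (v : ℂ) (hO1 : vB v^2 < vA v^2) (hO2 : vC v^2 < vA v^2) :
    {p : Fin 3 × Fin 3 | muIJ p.1 p.2 v = muMax v}.ncard = 1 := by
  have hT2 : 0 < vA v^2 := lt_of_le_of_lt (sq_nonneg _) hO1
  have hT0 : vA v ≠ 0 := by intro h; rw [h] at hT2; simp at hT2
  rcases hT0.lt_or_gt with hsgn | hsgn
  · have hMA : Mv v = -(vA v) := by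
      rw [Mv, sup_eq_left.mpr (abs_le_abs_sq hO1.le), sup_eq_left.mpr (abs_le_abs_sq hO2.le), abs_of_neg hsgn]
    have hmax : muMax v = Real.sqrt 2 * (-(vA v)) := by rw [muMax_eq', hMA]
    have hprodpos : 0 < Real.sqrt 2 * (-(vA v)) :=
      mul_pos sqrt2_pos (neg_pos.mpr hsgn)
    apply ncard_c v (2, 0)
    intro i j
    rcases fin3 i with rfl | rfl | rfl <;> rcases fin3 j with rfl | rfl | rfl <;>
      simp only [mval00, mval01, mval02, mval10, mval11, mval12, mval20, mval21, mval22,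
        hmax, Prod.mk.injEq] <;>
    norm_num [Fin.ext_iff] <;>
    (intro h;
     have ht2 := congrArg (· ^ 2) h;
     ring_nf at ht2;
     nlinarith [ht2, sqrt2_sq, hO1, hO2, hsgn, h, sqrt2_pos, hprodpos,
       sq_nonneg (vA v), sq_nonneg (vB v), sq_nonneg (vC v)])
  · have hMA : Mv v = vA v := by
      rw [Mv, sup_eq_left.mpr (abs_le_abs_sq hO1.le), sup_eq_left.mpr (abs_le_abs_sq hO2.le), abs_of_pos hsgn]
    have hmax : muMax v = Real.sqrt 2 * vA v := by rw [muMax_eq', hMA]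
    have hprodpos : 0 < Real.sqrt 2 * vA v := mul_pos sqrt2_pos hsgn
    apply ncard_c v (0, 2)
    intro i j
    rcases fin3 i with rfl | rfl | rfl <;> rcases fin3 j with rfl | rfl | rfl <;>
      simp only [mval00, mval01, mval02, mval10, mval11, mval12, mval20, mval21, mval22,
        hmax, Prod.mk.injEq] <;>
    norm_num [Fin.ext_iff] <;>
    (intro h;
     have ht2 := congrArg (· ^ 2) h;
     ring_nf at ht2;
     nlinarith [ht2, sqrt2_sq, hO1, hO2, hsgn, h, sqrt2_pos, hprodpos,
       sq_nonneg (vA v), sq_nonneg (vB v), sq_nonneg (vC v)])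

set_option maxHeartbeats 2000000 in
lemma c_caseB (v : ℂ) (hO1 : vA v^2 < vB v^2) (hO2 : vC v^2 < vB v^2) :
    {p : Fin 3 × Fin 3 | muIJ p.1 p.2 v = muMax v}.ncard = 1 := by
  have hT2 : 0 < vB v^2 := lt_of_le_of_lt (sq_nonneg _) hO1
  have hT0 : vB v ≠ 0 := by intro h; rw [h] at hT2; simp at hT2
  rcases hT0.lt_or_gt with hsgn | hsgn
  · have hMA : Mv v = -(vB v) := by
      rw [Mv, sup_eq_right.mpr (abs_le_abs_sq hO1.le), sup_eq_left.mpr (abs_le_abs_sq hO2.le), abs_of_neg hsgn]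
    have hmax : muMax v = Real.sqrt 2 * (-(vB v)) := by rw [muMax_eq', hMA]
    have hprodpos : 0 < Real.sqrt 2 * (-(vB v)) :=
      mul_pos sqrt2_pos (neg_pos.mpr hsgn)
    apply ncard_c v (1, 0)
    intro i j
    rcases fin3 i with rfl | rfl | rfl <;> rcases fin3 j with rfl | rfl | rfl <;>
      simp only [mval00, mval01, mval02, mval10, mval11, mval12, mval20, mval21, mval22,
        hmax, Prod.mk.injEq] <;>
    norm_num [Fin.ext_iff] <;>
    (intro h;
     have ht2 := congrArg (· ^ 2) h;
     ring_nf at ht2;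
     nlinarith [ht2, sqrt2_sq, hO1, hO2, hsgn, h, sqrt2_pos, hprodpos,
       sq_nonneg (vA v), sq_nonneg (vB v), sq_nonneg (vC v)])
  · have hMA : Mv v = vB v := by
      rw [Mv, sup_eq_right.mpr (abs_le_abs_sq hO1.le), sup_eq_left.mpr (abs_le_abs_sq hO2.le), abs_of_pos hsgn]
    have hmax : muMax v = Real.sqrt 2 * vB v := by rw [muMax_eq', hMA]
    have hprodpos : 0 < Real.sqrt 2 * vB v := mul_pos sqrt2_pos hsgn
    apply ncard_c v (0, 1)
    intro i j
    rcases fin3 i with rfl | rfl | rfl <;> rcases fin3 j with rfl | rfl | rfl <;>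
      simp only [mval00, mval01, mval02, mval10, mval11, mval12, mval20, mval21, mval22,
        hmax, Prod.mk.injEq] <;>
    norm_num [Fin.ext_iff] <;>
    (intro h;
     have ht2 := congrArg (· ^ 2) h;
     ring_nf at ht2;
     nlinarith [ht2, sqrt2_sq, hO1, hO2, hsgn, h, sqrt2_pos, hprodpos,
       sq_nonneg (vA v), sq_nonneg (vB v), sq_nonneg (vC v)])

set_option maxHeartbeats 2000000 in
lemma c_caseC (v : ℂ) (hO1 : vA v^2 < vC v^2) (hO2 : vB v^2 < vC v^2) :
    {p : Fin 3 × Fin 3 | muIJ p.1 p.2 v = muMax v}.ncard = 1 := by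
  have hT2 : 0 < vC v^2 := lt_of_le_of_lt (sq_nonneg _) hO1
  have hT0 : vC v ≠ 0 := by intro h; rw [h] at hT2; simp at hT2
  rcases hT0.lt_or_gt with hsgn | hsgn
  · have hMA : Mv v = -(vC v) := by
      rw [Mv, sup_eq_right.mpr (sup_le (abs_le_abs_sq hO1.le) (abs_le_abs_sq hO2.le)), abs_of_neg hsgn]
    have hmax : muMax v = Real.sqrt 2 * (-(vC v)) := by rw [muMax_eq', hMA]
    have hprodpos : 0 < Real.sqrt 2 * (-(vC v)) :=
      mul_pos sqrt2_pos (neg_pos.mpr hsgn)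
    apply ncard_c v (2, 1)
    intro i j
    rcases fin3 i with rfl | rfl | rfl <;> rcases fin3 j with rfl | rfl | rfl <;>
      simp only [mval00, mval01, mval02, mval10, mval11, mval12, mval20, mval21, mval22,
        hmax, Prod.mk.injEq] <;>
    norm_num [Fin.ext_iff] <;>
    (intro h;
     have ht2 := congrArg (· ^ 2) h;
     ring_nf at ht2;
     nlinarith [ht2, sqrt2_sq, hO1, hO2, hsgn, h, sqrt2_pos, hprodpos,
       sq_nonneg (vA v), sq_nonneg (vB v), sq_nonneg (vC v)])
  · have hMA : Mv v = vC v := by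
      rw [Mv, sup_eq_right.mpr (sup_le (abs_le_abs_sq hO1.le) (abs_le_abs_sq hO2.le)), abs_of_pos hsgn]
    have hmax : muMax v = Real.sqrt 2 * vC v := by rw [muMax_eq', hMA]
    have hprodpos : 0 < Real.sqrt 2 * vC v := mul_pos sqrt2_pos hsgn
    apply ncard_c v (1, 2)
    intro i j
    rcases fin3 i with rfl | rfl | rfl <;> rcases fin3 j with rfl | rfl | rfl <;>
      simp only [mval00, mval01, mval02, mval10, mval11, mval12, mval20, mval21, mval22,
        hmax, Prod.mk.injEq] <;>
    norm_num [Fin.ext_iff] <;>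
    (intro h;
     have ht2 := congrArg (· ^ 2) h;
     ring_nf at ht2;
     nlinarith [ht2, sqrt2_sq, hO1, hO2, hsgn, h, sqrt2_pos, hprodpos,
       sq_nonneg (vA v), sq_nonneg (vB v), sq_nonneg (vC v)])

lemma sqrt3_pos : (0:ℝ) < Real.sqrt 3 := Real.sqrt_pos.mpr (by norm_num)

lemma part_c (v : ℂ) (hv : ‖v‖ = 1) (h1 : v^3 ≠ 1) (h2 : v^3 ≠ -1) :
    {p : Fin 3 × Fin 3 | muIJ p.1 p.2 v = muMax v}.ncard = 1 := by
  have him : v.im * (3*v.re^2 - v.im^2) ≠ 0 := by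
    intro h
    rcases (cube_pm_one hv).mpr (by rw [cube_im_factor]; exact h) with h' | h'
    · exact h1 h'
    · exact h2 h'
  have hC0 : vC v ≠ 0 := by
    intro h
    rcases mul_eq_zero.mp (h : Real.sqrt 3 * v.im = 0) with h' | h'
    · exact absurd h' sqrt3_pos.ne'
    · exact him (by rw [h']; ring)
  have hA0 : vA v ≠ 0 := by
    intro h
    have hp := AB_prod v
    rw [h, zero_mul] at hp
    have hfac : 3*v.re^2 - v.im^2 = 0 := by linarith
    exact him (by rw [hfac, mul_zero])
  have hB0 : vB v ≠ 0 := by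
    intro h
    have hp := AB_prod v
    rw [h, mul_zero] at hp
    have hfac : 3*v.re^2 - v.im^2 = 0 := by linarith
    exact him (by rw [hfac, mul_zero])
  rcases core_tri sqrt3_sq (unit_sq hv) (vA_eq v) (vB_eq v) (vC_eq v) hA0 hB0 hC0 with
    ⟨u1, u2⟩ | ⟨u1, u2⟩ | ⟨u1, u2⟩
  · exact c_caseA v u1 u2
  · exact c_caseB v u1 u2
  · exact c_caseC v u1 u2

set_option maxHeartbeats 2000000 in
lemma part_d (v : ℂ) (hv : ‖v‖ = 1) (hor : v^3 = 1 ∨ v^3 = -1) :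
    {p : Fin 3 × Fin 3 | p.1 ≠ p.2 ∧ muIJ p.1 p.2 v = muMax v}.ncard = 2 := by
  have him : (v^3).im = 0 := (cube_pm_one hv).mp hor
  have him0 : v.im * (3*v.re^2 - v.im^2) = 0 := by rw [← cube_im_factor]; exact him
  have hmax : muMax v = Real.sqrt 2 * (3/2) := by
    rw [muMax_eq', (Mv_lo_iff hv).mpr him]
  have h1' := unit_sq hv
  rcases mul_eq_zero.mp him0 with hy | hq
  · have hx2 : v.re^2 = 1 := by rw [hy] at h1'; linarith
    have hfac : (v.re - 1)*(v.re + 1) = 0 := by linear_combination hx2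
    have hC : vC v = 0 := by rw [vC_eq, hy, mul_zero]
    rcases mul_eq_zero.mp hfac with h' | h'
    · have hx : v.re = 1 := by linarith
      have hA : vA v = 3/2 := by rw [vA_eq, hx, hy]; norm_num
      have hB : vB v = 3/2 := by rw [vB_eq, hx, hy]; norm_num
      apply ncard_d v (0, 2) (0, 1) (by decide)
      intro i j
      rcases fin3 i with rfl | rfl | rfl <;> rcases fin3 j with rfl | rfl | rfl <;>
        simp only [mval00, mval01, mval02, mval10, mval11, mval12, mval20, mval21, mval22, hmax, hA, hB, hC, Prod.mk.injEq, ne_eq] <;>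
        norm_num [Fin.ext_iff] <;>
        (intro h; linarith [sqrt2_pos])
    · have hx : v.re = -1 := by linarith
      have hA : vA v = -(3/2) := by rw [vA_eq, hx, hy]; norm_num
      have hB : vB v = -(3/2) := by rw [vB_eq, hx, hy]; norm_num
      apply ncard_d v (2, 0) (1, 0) (by decide)
      intro i j
      rcases fin3 i with rfl | rfl | rfl <;> rcases fin3 j with rfl | rfl | rfl <;>
        simp only [mval00, mval01, mval02, mval10, mval11, mval12, mval20, mval21, mval22, hmax, hA, hB, hC, Prod.mk.injEq, ne_eq] <;>
        norm_num [Fin.ext_iff] <;>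
        (intro h; linarith [sqrt2_pos])
  · have hx2 : v.re^2 = 1/4 := by linarith
    have hy2 : v.im^2 = 3/4 := by linarith
    have hC2 : vC v^2 = 9/4 := by
      rw [vC_eq, mul_pow]; linear_combination v.im^2 * sqrt3_sq + 3*hy2
    have hfacx : (v.re - 1/2)*(v.re + 1/2) = 0 := by linear_combination hx2
    have hfacc : (vC v - 3/2)*(vC v + 3/2) = 0 := by linear_combination hC2
    have hAC : vA v = (3*v.re + vC v)/2 := rfl
    have hBC : vB v = (3*v.re - vC v)/2 := rfl
    rcases mul_eq_zero.mp hfacx with hx' | hx' <;> rcases mul_eq_zero.mp hfacc with hc' | hc'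
    · have hx : v.re = 1/2 := by linarith
      have hC : vC v = 3/2 := by linarith
      have hA : vA v = 3/2 := by rw [hAC, hx, hC]; norm_num
      have hB : vB v = 0 := by rw [hBC, hx, hC]; norm_num
      apply ncard_d v (0, 2) (1, 2) (by decide)
      intro i j
      rcases fin3 i with rfl | rfl | rfl <;> rcases fin3 j with rfl | rfl | rfl <;>
        simp only [mval00, mval01, mval02, mval10, mval11, mval12, mval20, mval21, mval22, hmax, hA, hB, hC, Prod.mk.injEq, ne_eq] <;>
        norm_num [Fin.ext_iff] <;>
        (intro h; linarith [sqrt2_pos])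
    · have hx : v.re = 1/2 := by linarith
      have hC : vC v = -(3/2) := by linarith
      have hA : vA v = 0 := by rw [hAC, hx, hC]; norm_num
      have hB : vB v = 3/2 := by rw [hBC, hx, hC]; norm_num
      apply ncard_d v (0, 1) (2, 1) (by decide)
      intro i j
      rcases fin3 i with rfl | rfl | rfl <;> rcases fin3 j with rfl | rfl | rfl <;>
        simp only [mval00, mval01, mval02, mval10, mval11, mval12, mval20, mval21, mval22, hmax, hA, hB, hC, Prod.mk.injEq, ne_eq] <;>
        norm_num [Fin.ext_iff] <;>
        (intro h; linarith [sqrt2_pos])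
    · have hx : v.re = -(1/2) := by linarith
      have hC : vC v = 3/2 := by linarith
      have hA : vA v = 0 := by rw [hAC, hx, hC]; norm_num
      have hB : vB v = -(3/2) := by rw [hBC, hx, hC]; norm_num
      apply ncard_d v (1, 0) (1, 2) (by decide)
      intro i j
      rcases fin3 i with rfl | rfl | rfl <;> rcases fin3 j with rfl | rfl | rfl <;>
        simp only [mval00, mval01, mval02, mval10, mval11, mval12, mval20, mval21, mval22, hmax, hA, hB, hC, Prod.mk.injEq, ne_eq] <;>
        norm_num [Fin.ext_iff] <;>
        (intro h; linarith [sqrt2_pos])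
    · have hx : v.re = -(1/2) := by linarith
      have hC : vC v = -(3/2) := by linarith
      have hA : vA v = -(3/2) := by rw [hAC, hx, hC]; norm_num
      have hB : vB v = 0 := by rw [hBC, hx, hC]; norm_num
      apply ncard_d v (2, 0) (2, 1) (by decide)
      intro i j
      rcases fin3 i with rfl | rfl | rfl <;> rcases fin3 j with rfl | rfl | rfl <;>
        simp only [mval00, mval01, mval02, mval10, mval11, mval12, mval20, mval21, mval22, hmax, hA, hB, hC, Prod.mk.injEq, ne_eq] <;>
        norm_num [Fin.ext_iff] <;>
        (intro h; linarith [sqrt2_pos])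

lemma sqrt6_eq : Real.sqrt 6 = Real.sqrt 2 * Real.sqrt 3 := by
  rw [← Real.sqrt_mul (by norm_num : (0:ℝ) ≤ 2) 3]; norm_num


/-- (a) the maximum of `μ` over the unit circle is `√6`, attained
exactly at `v` with `v³ = ±i`; (b) the minimum is `3√2/2`, attained exactly at
`v` with `v³ = ±1`; (c) if `v³ ≠ ±1` there is a unique pair `(i,j)` with
`μ_{ij}(v) = μ(v)`; (d) if `v³ = ±1` there are exactly two pairs `(i,j)` with
`i ≠ j` and `μ_{ij}(v) = μ(v)`. -/
theorem stmt9 :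
    (∀ v : ℂ, ‖v‖ = 1 → muMax v ≤ Real.sqrt 6) ∧
    (∀ v : ℂ, ‖v‖ = 1 →
      (muMax v = Real.sqrt 6 ↔ v ^ 3 = Complex.I ∨ v ^ 3 = -Complex.I)) ∧
    (∀ v : ℂ, ‖v‖ = 1 → 3 * Real.sqrt 2 / 2 ≤ muMax v) ∧
    (∀ v : ℂ, ‖v‖ = 1 →
      (muMax v = 3 * Real.sqrt 2 / 2 ↔ v ^ 3 = 1 ∨ v ^ 3 = -1)) ∧
    (∀ v : ℂ, ‖v‖ = 1 → v ^ 3 ≠ 1 → v ^ 3 ≠ -1 →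
      {p : Fin 3 × Fin 3 | muIJ p.1 p.2 v = muMax v}.ncard = 1) ∧
    (∀ v : ℂ, ‖v‖ = 1 → (v ^ 3 = 1 ∨ v ^ 3 = -1) →
      {p : Fin 3 × Fin 3 | p.1 ≠ p.2 ∧ muIJ p.1 p.2 v = muMax v}.ncard = 2) := by
  refine ⟨?_, ?_, ?_, ?_, ?_, ?_⟩
  · intro v hv
    rw [muMax_eq', sqrt6_eq]
    exact mul_le_mul_of_nonneg_left (Mv_le hv) sqrt2_pos.le
  · intro v hv
    rw [muMax_eq', sqrt6_eq]
    constructor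
    · intro h
      exact (cube_pm_I hv).mpr ((Mv_hi_iff hv).mp (mul_left_cancel₀ sqrt2_pos.ne' h))
    · intro h
      rw [(Mv_hi_iff hv).mpr ((cube_pm_I hv).mp h)]
  · intro v hv
    rw [muMax_eq']
    have := mul_le_mul_of_nonneg_left (Mv_lo hv) sqrt2_pos.le
    linarith
  · intro v hv
    rw [muMax_eq', show 3 * Real.sqrt 2 / 2 = Real.sqrt 2 * (3/2) by ring]
    constructor
    · intro h
      exact (cube_pm_one hv).mpr ((Mv_lo_iff hv).mp (mul_left_cancel₀ sqrt2_pos.ne' h))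
    · intro h
      rw [(Mv_lo_iff hv).mpr ((cube_pm_one hv).mp h)]
  · exact fun v hv h1 h2 => part_c v hv h1 h2
  · exact fun v hv hor => part_d v hv hor
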